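/- Let G be a connected multigraph with n vertices q₁, ..., q_n of degrees d₁, ..., d_n. Then the number of spanning trees of G satisfies τ(G) ≤ d₁ · d₂ ⋯ d_{n-1} (the product of the degrees of any n−1 of the vertices). -/

import Mathlib

set_option maxHeartbeats 1000000

open SimpleGraph Finset

namespace Stmt4Aux

open scoped Classical

variable {n : ℕ} (v₀ : Fin n)

/-- The second vertex on the chosen path from `v` to `v₀` (the "parent" of `v`
when the graph is a tree rooted at `v₀`). -/
noncomputable def parent (H : SimpleGraph (Fin n)) (v : Fin n) : Fin n :=
  if h : H.Reachable v v₀ then h.some.toPath.val.getVert 1 else v₀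

/-- The length of the chosen path from `v` to `v₀`. -/
noncomputable def rk (H : SimpleGraph (Fin n)) (v : Fin n) : ℕ :=
  if h : H.Reachable v v₀ then h.some.toPath.val.length else 0

variable {H : SimpleGraph (Fin n)} (hH : H.IsTree)
include hH

lemma parent_spec {v : Fin n} (p : H.Walk v v₀) (hp : p.IsPath) :
    parent v₀ H v = p.getVert 1 := by
  have hr : H.Reachable v v₀ := hH.isConnected.preconnected v v₀
  rw [parent, dif_pos hr, hH.IsAcyclic.path_unique hr.some.toPath ⟨p, hp⟩]

lemma rk_spec {v : Fin n} (p : H.Walk v v₀) (hp : p.IsPath) :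
    rk v₀ H v = p.length := by
  have hr : H.Reachable v v₀ := hH.isConnected.preconnected v v₀
  rw [rk, dif_pos hr, hH.IsAcyclic.path_unique hr.some.toPath ⟨p, hp⟩]

lemma adj_parent {v : Fin n} (hv : v ≠ v₀) : H.Adj v (parent v₀ H v) := by
  have hr : H.Reachable v v₀ := hH.isConnected.preconnected v v₀
  set p := hr.some.toPath with hp
  rw [parent_spec v₀ hH p.val p.property]
  exact SimpleGraph.Walk.adj_snd (p := p.val) (SimpleGraph.Walk.not_nil_of_ne hv)

lemma rk_parent {v : Fin n} (hv : v ≠ v₀) :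
    rk v₀ H (parent v₀ H v) + 1 = rk v₀ H v := by
  have hr : H.Reachable v v₀ := hH.isConnected.preconnected v v₀
  set p := hr.some.toPath with hp
  have hnil : ¬ p.val.Nil := SimpleGraph.Walk.not_nil_of_ne hv
  have h1 : parent v₀ H v = p.val.getVert 1 := parent_spec v₀ hH p.val p.property
  have h2 : rk v₀ H (p.val.getVert 1) = p.val.tail.length :=
    rk_spec v₀ hH p.val.tail (p.property.tail)
  have h3 : rk v₀ H v = p.val.length := rk_spec v₀ hH p.val p.property
  rw [h1, h2, h3, SimpleGraph.Walk.length_tail_add_one hnil]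

lemma rk_pos {v : Fin n} (hv : v ≠ v₀) : 0 < rk v₀ H v := by
  have hr : H.Reachable v v₀ := hH.isConnected.preconnected v v₀
  set p := hr.some.toPath with hp
  have h3 : rk v₀ H v = p.val.length := rk_spec v₀ hH p.val p.property
  rcases Nat.eq_zero_or_pos p.val.length with h | h
  · exact absurd (SimpleGraph.Walk.eq_of_length_eq_zero h) hv
  · omega

lemma emap_inj {a b : Fin n} (ha : a ≠ v₀) (hb : b ≠ v₀)
    (h : s(a, parent v₀ H a) = s(b, parent v₀ H b)) : a = b := by
  rw [Sym2.eq_iff] at h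
  rcases h with ⟨h, -⟩ | ⟨h1, h2⟩
  · exact h
  · have ra := rk_parent v₀ hH ha
    have rb := rk_parent v₀ hH hb
    rw [← h1] at rb
    rw [h2] at ra
    omega

lemma image_eq :
    ((Finset.univ.erase v₀).image fun v => s(v, parent v₀ H v)) = H.edgeFinset := by
  apply Finset.eq_of_subset_of_card_le
  · intro e he
    obtain ⟨v, hv, rfl⟩ := Finset.mem_image.mp he
    exact SimpleGraph.mem_edgeFinset.mpr (adj_parent v₀ hH (Finset.mem_erase.mp hv).1)
  · have hcard : H.edgeFinset.card + 1 = n := by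
      simpa using hH.card_edgeFinset
    rw [Finset.card_image_of_injOn fun a ha b hb h =>
      emap_inj v₀ hH (Finset.mem_erase.mp ha).1 (Finset.mem_erase.mp hb).1 h,
      Finset.card_erase_of_mem (Finset.mem_univ _), Finset.card_univ, Fintype.card_fin]
    omega

lemma weight_eq (m : Fin n → Fin n → ℕ) (hsym : ∀ v w, m v w = m w v) :
    ∏ e ∈ H.edgeFinset, Sym2.lift ⟨m, hsym⟩ e
      = ∏ v ∈ Finset.univ.erase v₀, m v (parent v₀ H v) := by
  rw [← image_eq v₀ hH, Finset.prod_image fun a ha b hb h =>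
    emap_inj v₀ hH (Finset.mem_erase.mp ha).1 (Finset.mem_erase.mp hb).1 h]
  simp [Sym2.lift_mk]

end Stmt4Aux

open scoped Classical in
/-- For a connected multigraph on `n` vertices, given by a symmetric edge-multiplicity
function `m` without loops, the number of spanning trees (each simple spanning tree
weighted by the product of the multiplicities of its edges) is at most the product of
the degrees of any `n - 1` of the vertices. -/
theorem stmt4 (n : ℕ) (hn : 1 ≤ n) (m : Fin n → Fin n → ℕ)
    (hsym : ∀ v w, m v w = m w v) (hloop : ∀ v, m v v = 0)
    (hconn : (SimpleGraph.fromRel fun v w => 0 < m v w).Connected) (v₀ : Fin n) :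
    ∑ H ∈ Finset.univ.filter (fun H : SimpleGraph (Fin n) => H.IsTree),
        ∏ e ∈ H.edgeFinset, Sym2.lift ⟨m, hsym⟩ e ≤
      ∏ v ∈ Finset.univ.erase v₀, ∑ w, m v w := by
  classical
  set S := Finset.univ.filter (fun H : SimpleGraph (Fin n) => H.IsTree) with hS
  set s : Finset (Fin n) := Finset.univ.erase v₀ with hs
  let Φ : SimpleGraph (Fin n) → (↥s → Fin n) := fun H v => Stmt4Aux.parent v₀ H v.1
  have hinj : ∀ A ∈ S, ∀ B ∈ S, Φ A = Φ B → A = B := by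
    intro A hA B hB h
    have hA' : A.IsTree := (Finset.mem_filter.mp hA).2
    have hB' : B.IsTree := (Finset.mem_filter.mp hB).2
    apply SimpleGraph.edgeFinset_inj.mp
    rw [← Stmt4Aux.image_eq v₀ hA', ← Stmt4Aux.image_eq v₀ hB']
    apply Finset.image_congr
    intro v hv
    have hp : Stmt4Aux.parent v₀ A v = Stmt4Aux.parent v₀ B v := congrFun h ⟨v, hv⟩
    simp only [hp]
  calc ∑ H ∈ S, ∏ e ∈ H.edgeFinset, Sym2.lift ⟨m, hsym⟩ e
      = ∑ H ∈ S, ∏ v : ↥s, m v.1 (Φ H v) := by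
        refine Finset.sum_congr rfl fun H hH => ?_
        rw [Stmt4Aux.weight_eq v₀ (Finset.mem_filter.mp hH).2 m hsym,
          ← Finset.prod_coe_sort]
    _ = ∑ g ∈ S.image Φ, ∏ v : ↥s, m v.1 (g v) := (Finset.sum_image (f := fun g : ↥s → Fin n => ∏ v, m v.1 (g v)) hinj).symm
    _ ≤ ∑ g : ↥s → Fin n, ∏ v : ↥s, m v.1 (g v) :=
        Finset.sum_le_sum_of_subset (Finset.subset_univ _)
    _ = ∏ v : ↥s, ∑ w, m v.1 w := (Fintype.prod_sum _).symm
    _ = ∏ v ∈ s, ∑ w, m v w := Finset.prod_coe_sort s (fun v => ∑ w, m v w)
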